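/- Two monoids M and E have equivalent categories of right acts, [M^op, Set] ≃ [E^op, Set], if and only if there exists a cyclic projective generator A of the category of right M-acts whose endomorphism monoid is isomorphic to E; in that case the equivalence is given by Hom_M(A, −) and − ⊗_E A. -/

import Mathlib

open CategoryTheory

universe u

/-- The category of right `M`-acts, as contravariant functors `SingleObj M ⥤ Type`. -/
abbrev ActCat (M : Type u) [Monoid M] := (SingleObj M)ᵒᵖ ⥤ Type u

/-- A right `M`-act is cyclic if it is generated by a single element. -/
def CyclicAct {M : Type u} [Monoid M] (A : ActCat M) : Prop :=
  ∃ a : A.obj (Opposite.op (SingleObj.star M)),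
    ∀ y : A.obj (Opposite.op (SingleObj.star M)),
      ∃ m : M, y = A.map (SingleObj.toEnd M m).op a

/-- The hom functor `Hom_M(A, −)`, landing in right `E`-acts via a monoid map
`φ : E →* End A` (`E` acts on `Hom_M(A, X)` by precomposition). -/
def homFunctor {M : Type u} [Monoid M] {E : Type u} [Monoid E] (A : ActCat M)
    (φ : E →* CategoryTheory.End A) : ActCat M ⥤ ActCat E where
  obj X :=
    { obj := fun _ => A ⟶ X
      map := fun e => TypeCat.ofHom (fun f => (φ e.unop : A ⟶ A) ≫ f)
      map_id := by
        intro x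
        apply TypeCat.homEquiv.injective
        funext f
        show (φ ((𝟙 x).unop) : A ⟶ A) ≫ f = f
        rw [show (𝟙 x).unop = (1 : E) from rfl]
        simp [End.one_def]
      map_comp := by
        intro x y z g h
        apply TypeCat.homEquiv.injective
        funext f
        show (φ ((g ≫ h).unop) : A ⟶ A) ≫ f = (φ h.unop : A ⟶ A) ≫ ((φ g.unop : A ⟶ A) ≫ f)
        rw [show (g ≫ h).unop = g.unop * h.unop from rfl]
        rw [map_mul]
        simp [End.mul_def] }
  map g := { app := fun _ => TypeCat.ofHom (fun f => f ≫ g) }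

namespace Morita
variable {N : Type u} [Monoid N]

/-- the single object -/
abbrev pt (N : Type u) [Monoid N] : (SingleObj N)ᵒᵖ := Opposite.op (SingleObj.star N)

@[simp] def act (X : ActCat N) (x : X.obj (pt N)) (m : N) : X.obj (pt N) :=
  X.map (SingleObj.toEnd N m).op x

lemma act_one (X : ActCat N) (x : X.obj (pt N)) : act X x 1 = x := by
  show (X.map (𝟙 (pt N))) x = x
  rw [X.map_id]; rfl

lemma act_mul (X : ActCat N) (x : X.obj (pt N)) (m n : N) :
    act X x (m * n) = act X (act X x m) n := by
  show X.map _ x = (X.map _ ≫ X.map _) x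
  rw [← X.map_comp]; rfl

lemma app_act {X Y : ActCat N} (h : X ⟶ Y) (x : X.obj (pt N)) (m : N) :
    h.app (pt N) (act X x m) = act Y (h.app (pt N) x) m :=
  NatTrans.naturality_apply h (SingleObj.toEnd N m).op x

lemma hom_ext {X Y : ActCat N} {h k : X ⟶ Y}
    (e : h.app (pt N) = k.app (pt N)) : h = k := by
  ext u x; exact ConcreteCategory.congr_hom e x

/-- The regular right act. -/
abbrev reg (N : Type u) [Monoid N] : ActCat N where
  obj _ := N
  map f := TypeCat.ofHom (fun x => x * f.unop)
  map_id _ := by apply TypeCat.homEquiv.injective; funext x; exact mul_one x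
  map_comp f g := by apply TypeCat.homEquiv.injective; funext x; exact (mul_assoc x _ _).symm

@[simp] lemma act_reg (x m : N) : act (reg N) x m = x * m := rfl

/-- morphism from the regular act classifying an element -/
def toHom {X : ActCat N} (x : X.obj (pt N)) : reg N ⟶ X where
  app _ := TypeCat.ofHom (fun m => act X x m)
  naturality u v f := by apply TypeCat.homEquiv.injective; funext m; exact act_mul X x m f.unop

@[simp] lemma toHom_app {X : ActCat N} (x : X.obj (pt N)) (m : N) :
    (toHom x).app (pt N) m = act X x m := rfl

lemma hom_eq_toHom {X : ActCat N} (h : reg N ⟶ X) : h = toHom (h.app (pt N) (1 : N)) := by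
  apply hom_ext; ext m
  show h.app (pt N) m = act X (h.app (pt N) (1 : N)) m
  rw [← app_act h (1 : N) m, act_reg, one_mul]

lemma toHom_comp {X Y : ActCat N} (h : X ⟶ Y) (x : X.obj (pt N)) :
    toHom (h.app (pt N) x) = toHom x ≫ h := by
  apply hom_ext; ext m
  exact (app_act h x m).symm

/-- jointly epimorphic families are jointly surjective -/
lemma jointly_surjective {ι : Type u} (Xf : ι → ActCat N) (Y : ActCat N)
    (p : ∀ i, Xf i ⟶ Y)
    (hje : ∀ (Z : ActCat N) (f g : Y ⟶ Z), (∀ i, p i ≫ f = p i ≫ g) → f = g) :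
    ∀ y : Y.obj (pt N), ∃ i x, (p i).app (pt N) x = y := by
  classical
  set U : Set (Y.obj (pt N)) := {y | ∃ i x, (p i).app (pt N) x = y} with hU
  -- relation collapsing U to an external basepoint
  let r : Option (Y.obj (pt N)) → Option (Y.obj (pt N)) → Prop :=
    fun o o' => ∃ u ∈ U, o = some u ∧ o' = none
  have hrespect : ∀ (m : N) o o', r o o' →
      r (o.map (fun y => act Y y m)) (o'.map (fun y => act Y y m)) := by
    rintro m o o' ⟨u, hu, rfl, rfl⟩
    refine ⟨act Y u m, ?_, rfl, rfl⟩
    obtain ⟨i, x, hx⟩ := hu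
    exact ⟨i, act (Xf i) x m, by rw [app_act, hx]⟩
  let Z : ActCat N :=
    { obj := fun _ => Quot r
      map := fun f => TypeCat.ofHom (Quot.map (Option.map (fun y => act Y y f.unop)) (hrespect f.unop))
      map_id := by
        intro u
        ext t
        induction t using Quot.ind with
        | _ o =>
          cases o with
          | none => rfl
          | some y =>
            show Quot.mk r (some (act Y y (1:N))) = Quot.mk r (some y)
            rw [act_one]
      map_comp := by
        intro u v w f g
        ext t
        induction t using Quot.ind with
        | _ o =>
          cases o with
          | none => rfl
          | some y =>
            show Quot.mk r (some (act Y y (f.unop * g.unop))) = _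
            rw [act_mul]; rfl }
  let f₁ : Y ⟶ Z := { app := fun _ => TypeCat.ofHom (fun y => Quot.mk r (some y)), naturality := fun _ _ _ => rfl }
  let f₂ : Y ⟶ Z := { app := fun _ => TypeCat.ofHom (fun _ => Quot.mk r none), naturality := fun _ _ _ => rfl }
  have heq : f₁ = f₂ := by
    apply hje
    intro i
    apply hom_ext
    ext x
    exact Quot.sound ⟨(p i).app (pt N) x, ⟨i, x, rfl⟩, rfl, rfl⟩
  intro y
  have : Quot.mk r (some y) = Quot.mk r none := types_congr_hom (congrArg (fun h => h.app (pt N)) heq) y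
  have hP : ∀ o o', r o o' →
      ((∀ y', o = some y' → y' ∈ U) = (∀ y', o' = some y' → y' ∈ U)) := by
    rintro o o' ⟨u, hu, rfl, rfl⟩
    apply propext
    constructor
    · intro _ y' h; cases h
    · intro _ y' h; cases h; exact hu
  have h2 : (∀ y', (some y : Option (Y.obj (pt N))) = some y' → y' ∈ U)
      = (∀ y', (none : Option (Y.obj (pt N))) = some y' → y' ∈ U) :=
    congrArg (Quot.lift (fun o => ∀ y', o = some y' → y' ∈ U) hP) this
  have h3 : ∀ y', (some y : Option (Y.obj (pt N))) = some y' → y' ∈ U :=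
    cast h2.symm (fun _ h => nomatch h)
  exact h3 y rfl

lemma epi_surjective {X Y : ActCat N} (p : X ⟶ Y) [Epi p] :
    Function.Surjective (p.app (pt N)) := by
  intro y
  have hje : ∀ (Z : ActCat N) (f g : Y ⟶ Z),
      (∀ _ : PUnit.{u+1}, (fun _ : PUnit.{u+1} => p) ⟨⟩ ≫ f = (fun _ : PUnit.{u+1} => p) ⟨⟩ ≫ g) → f = g := by
    intro Z f g h
    rw [← cancel_epi p]
    exact h ⟨⟩
  obtain ⟨_, x, hx⟩ := jointly_surjective (fun _ : PUnit.{u+1} => X) Y (fun _ => p) hje y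
  exact ⟨x, hx⟩

lemma epi_of_surjective {X Y : ActCat N} (p : X ⟶ Y)
    (hp : Function.Surjective (p.app (pt N))) : Epi p := by
  constructor
  intro Z f g h
  apply hom_ext
  ext y
  obtain ⟨x, rfl⟩ := hp y
  exact types_congr_hom (congrArg (fun t => t.app (pt N)) h) x

lemma isSeparator_reg : IsSeparator (reg N) := by
  rw [isSeparator_def]
  intro X Y f g h
  apply hom_ext
  ext x
  have := congrArg (fun t => t.app (pt N) (1 : N)) (h (toHom x))
  change f.app (pt N) (act X x 1) = g.app (pt N) (act X x 1) at this
  rwa [act_one] at this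

lemma projective_reg : Projective (reg N) := by
  constructor
  intro Z X f e he
  obtain ⟨x, hx⟩ := epi_surjective e (f.app (pt N) (1 : N))
  refine ⟨toHom x, ?_⟩
  rw [← toHom_comp, hx]
  exact (hom_eq_toHom f).symm

end Morita

namespace Morita
variable {M : Type u} [Monoid M] {E : Type u} [Monoid E]

section Part2
variable (A : ActCat M) (φ : E ≃* CategoryTheory.End A)

lemma homFunctor_act (X : ActCat M) (f : A ⟶ X) (e : E) :
    act ((homFunctor A φ.toMonoidHom).obj X) f e = (φ e : A ⟶ A) ≫ f := rfl

lemma homFunctor_map_app (X Y : ActCat M) (g : X ⟶ Y) (f : A ⟶ X) :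
    ((homFunctor A φ.toMonoidHom).map g).app (pt E) f = f ≫ g := rfl

/-- From separator: an element `k` and `ρ : A ⟶ reg M` with `ρ k = 1`. -/
lemma exists_gen (hsep : IsSeparator A) :
    ∃ (ρ : A ⟶ reg M) (k : A.obj (pt M)), ρ.app (pt M) k = (1 : M) := by
  have hje : ∀ (Z : ActCat M) (f g : reg M ⟶ Z),
      (∀ i : (A ⟶ reg M), i ≫ f = i ≫ g) → f = g := by
    intro Z f g h
    exact hsep.def f g h
  obtain ⟨ρ, k, hk⟩ := jointly_surjective (fun _ : (A ⟶ reg M) => A) (reg M)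
    (fun i => i) hje (1 : M)
  exact ⟨ρ, k, hk⟩

variable {A} in
/-- equivariance of a morphism of `homFunctor` images under all endomorphisms of `A` -/
lemma psi_equivariant {X Y : ActCat M}
    (q : (homFunctor A φ.toMonoidHom).obj X ⟶ (homFunctor A φ.toMonoidHom).obj Y)
    (u : CategoryTheory.End A) (h : A ⟶ X) :
    q.app (pt E) ((u : A ⟶ A) ≫ h) = (u : A ⟶ A) ≫ q.app (pt E) h := by
  have := app_act q h (φ.symm u)
  erw [homFunctor_act, homFunctor_act] at this
  rw [φ.apply_symm_apply] at this
  exact this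

end Part2
end Morita

namespace Morita
variable {M : Type u} [Monoid M] {E : Type u} [Monoid E]
variable (A : ActCat M) (φ : E ≃* CategoryTheory.End A)

lemma homFunctor_faithful (hsep : IsSeparator A) :
    (homFunctor A φ.toMonoidHom).Faithful := by
  constructor
  intro X Y f g hfg
  exact hsep.def f g fun h => types_congr_hom (congrArg (fun t => t.app (pt E)) hfg) h

lemma homFunctor_full (hsep : IsSeparator A) :
    (homFunctor A φ.toMonoidHom).Full := by
  obtain ⟨ρ, k, hk⟩ := exists_gen A hsep
  have hκρ : toHom k ≫ ρ = 𝟙 (reg M) := by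
    apply hom_ext
    ext n
    show ρ.app (pt M) (act A k n) = n
    rw [app_act, hk, act_reg, one_mul]
  constructor
  intro X Y q
  set fapp : X.obj (pt M) → Y.obj (pt M) :=
    fun x => (q.app (pt E) (ρ ≫ toHom x)).app (pt M) k with hfapp
  have hcomp : ∀ (h : A ⟶ X) (a : A.obj (pt M)),
      fapp (h.app (pt M) a) = (q.app (pt E) h).app (pt M) a := by
    intro h a
    have h1 : ρ ≫ toHom (h.app (pt M) a) = ((ρ ≫ toHom a : CategoryTheory.End A) : A ⟶ A) ≫ h := by
      rw [toHom_comp h a]; simp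
    rw [hfapp]
    show (q.app (pt E) (ρ ≫ toHom (h.app (pt M) a))).app (pt M) k = _
    rw [h1, psi_equivariant φ q (ρ ≫ toHom a) h]
    show (q.app (pt E) h).app (pt M) ((ρ ≫ toHom a).app (pt M) k) = _
    have h2 : (ρ ≫ toHom a).app (pt M) k = a := by
      show act A a (ρ.app (pt M) k) = a
      rw [hk, act_one]
    rw [h2]
  have hequiv : ∀ (x : X.obj (pt M)) (m : M), fapp (act X x m) = act Y (fapp x) m := by
    intro x m
    have h1 : ρ ≫ toHom (act X x m)
        = ((ρ ≫ toHom (m : (reg M).obj (pt M)) ≫ toHom k : CategoryTheory.End A) : A ⟶ A)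
          ≫ (ρ ≫ toHom x) := by
      have h2 : toHom (act X x m) = toHom (m : (reg M).obj (pt M)) ≫ toHom x :=
        toHom_comp (toHom x) (m : (reg M).obj (pt M))
      rw [h2]
      show ρ ≫ toHom (m : (reg M).obj (pt M)) ≫ toHom x
        = (ρ ≫ toHom (m : (reg M).obj (pt M)) ≫ toHom k) ≫ ρ ≫ toHom x
      rw [Category.assoc, Category.assoc, ← Category.assoc (toHom k) ρ, hκρ]
      simp
    rw [hfapp]
    show (q.app (pt E) (ρ ≫ toHom (act X x m))).app (pt M) k = _
    rw [h1, psi_equivariant φ q _ (ρ ≫ toHom x)]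
    show (q.app (pt E) (ρ ≫ toHom x)).app (pt M)
      ((ρ ≫ toHom (m : (reg M).obj (pt M)) ≫ toHom k).app (pt M) k) = _
    have h3 : (ρ ≫ toHom (m : (reg M).obj (pt M)) ≫ toHom k).app (pt M) k = act A k m := by
      show act A k (act (reg M) m (ρ.app (pt M) k)) = act A k m
      rw [hk, act_reg, mul_one]
    rw [h3]
    erw [app_act]
  refine ⟨{ app := fun _ => TypeCat.ofHom (fun x => fapp x),
            naturality := fun u v g => by ext x; exact hequiv x g.unop }, ?_⟩
  apply hom_ext
  ext h
  show h ≫ _ = q.app (pt E) h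
  apply hom_ext
  ext a
  exact hcomp h a

lemma homFunctor_essSurj (hproj : Projective A) (hcyc : CyclicAct A) :
    (homFunctor A φ.toMonoidHom).EssSurj := by
  obtain ⟨a₀, ha₀⟩ := hcyc
  have hπs : Function.Surjective ((toHom a₀ : reg M ⟶ A).app (pt M)) := by
    intro y
    obtain ⟨m, hm⟩ := ha₀ y
    exact ⟨m, hm.symm⟩
  have hπe : Epi (toHom a₀ : reg M ⟶ A) := epi_of_surjective _ hπs
  obtain ⟨σ, hσ⟩ := hproj.factors (𝟙 A) (toHom a₀)
  constructor
  intro B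
  -- the tensor product B ⊗_E A
  let rel : (B.obj (pt E) × A.obj (pt M)) → (B.obj (pt E) × A.obj (pt M)) → Prop :=
    fun p q => ∃ (e : E) (b : B.obj (pt E)) (a : A.obj (pt M)),
      p = (act B b e, a) ∧ q = (b, (φ e : A ⟶ A).app (pt M) a)
  have hrespect : ∀ (m : M) p q, rel p q →
      rel (p.1, act A p.2 m) (q.1, act A q.2 m) := by
    rintro m p q ⟨e, b, a, rfl, rfl⟩
    refine ⟨e, b, act A a m, rfl, ?_⟩
    rw [app_act (φ e : A ⟶ A) a m]
  let T : ActCat M :=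
    { obj := fun _ => Quot rel
      map := fun f => TypeCat.ofHom (Quot.map (fun p => (p.1, act A p.2 f.unop)) (hrespect f.unop))
      map_id := by
        intro u
        ext t
        induction t using Quot.ind with
        | _ p =>
          show Quot.mk rel (p.1, act A p.2 (1 : M)) = Quot.mk rel p
          rw [act_one]
      map_comp := by
        intro u v w f g
        ext t
        induction t using Quot.ind with
        | _ p =>
          show Quot.mk rel (p.1, act A p.2 (f.unop * g.unop)) = _
          rw [act_mul]
          rfl }
  let η : B ⟶ (homFunctor A φ.toMonoidHom).obj T :=
    { app := fun _ => TypeCat.ofHom (fun b =>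
        ({ app := fun _ => TypeCat.ofHom (fun a => Quot.mk rel (b, a))
           naturality := fun _ _ _ => rfl } : A ⟶ T))
      naturality := by
        intro u v f
        ext b
        apply hom_ext (N := M)
        ext a
        exact Quot.sound ⟨f.unop, b, a, rfl, rfl⟩ }
  let zeta : B.obj (pt E) × A.obj (pt M) → B.obj (pt E) :=
    fun p => act B p.1 (φ.symm (σ ≫ toHom p.2))
  have hzeta : ∀ p q, rel p q → zeta p = zeta q := by
    rintro p q ⟨e, b, a, rfl, rfl⟩
    show act B (act B b e) (φ.symm (σ ≫ toHom a))
      = act B b (φ.symm (σ ≫ toHom ((φ e : A ⟶ A).app (pt M) a)))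
    rw [toHom_comp (φ e : A ⟶ A) a]
    have h1 : φ.symm (σ ≫ toHom a ≫ (φ e : A ⟶ A)) = e * φ.symm (σ ≫ toHom a) := by
      have h2 : (σ ≫ toHom a ≫ (φ e : A ⟶ A)) = φ e * (show CategoryTheory.End A from σ ≫ toHom a) := by
        rw [End.mul_def]
        exact (Category.assoc _ _ _).symm
      rw [h2, map_mul, φ.symm_apply_apply]
    rw [h1, act_mul]
  have key1 : ∀ b, Quot.lift zeta hzeta (Quot.mk rel (b, a₀)) = b := by
    intro b
    show act B b (φ.symm (σ ≫ toHom a₀)) = b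
    rw [hσ]
    rw [show ((𝟙 A : A ⟶ A) : CategoryTheory.End A) = (1 : CategoryTheory.End A) from rfl]
    rw [map_one, act_one]
  have key2 : ∀ h : A ⟶ T, ∃ b, η.app (pt E) b = h := by
    intro h
    obtain ⟨⟨b₁, a₁⟩, hb⟩ := Quot.exists_rep (h.app (pt M) a₀)
    refine ⟨act B b₁ (φ.symm (σ ≫ toHom a₁)), ?_⟩
    apply hom_ext (N := M)
    ext a
    show Quot.mk rel (act B b₁ (φ.symm (σ ≫ toHom a₁)), a) = h.app (pt M) a
    have hstep : Quot.mk rel (act B b₁ (φ.symm (σ ≫ toHom a₁)), a)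
        = Quot.mk rel (b₁, (φ (φ.symm (σ ≫ toHom a₁)) : A ⟶ A).app (pt M) a) :=
      Quot.sound ⟨φ.symm (σ ≫ toHom a₁), b₁, a, rfl, rfl⟩
    rw [hstep, φ.apply_symm_apply]
    have ha : a = act A a₀ (σ.app (pt M) a) := by
      have := types_congr_hom (congrArg (fun (t : A ⟶ A) => t.app (pt M)) hσ) a
      exact this.symm
    have hRHS : h.app (pt M) a = Quot.mk rel (b₁, act A a₁ (σ.app (pt M) a)) := by
      conv_lhs => rw [ha]
      rw [app_act h a₀ (σ.app (pt M) a), ← hb]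
      rfl
    rw [hRHS]
    rfl
  have hbij : ∀ (u : (SingleObj E)ᵒᵖ), IsIso (η.app u) := by
    intro u
    have : Function.Bijective (η.app (pt E)) := by
      constructor
      · intro b b' hbb
        have h5 := congrArg (fun (t : A ⟶ T) => Quot.lift zeta hzeta (t.app (pt M) a₀)) hbb
        exact (key1 b).symm.trans (h5.trans (key1 b'))
      · exact fun h => key2 h
    exact (isIso_iff_bijective (η.app u)).2 this
  have : IsIso η := @NatIso.isIso_of_isIso_app _ _ _ _ _ _ η hbij
  exact ⟨T, ⟨(asIso η).symm⟩⟩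

lemma homFunctor_isEquivalence (hproj : Projective A) (hsep : IsSeparator A)
    (hcyc : CyclicAct A) : (homFunctor A φ.toMonoidHom).IsEquivalence :=
  { faithful := homFunctor_faithful A φ hsep
    full := homFunctor_full A φ hsep
    essSurj := homFunctor_essSurj A φ hproj hcyc }

end Morita

namespace Morita
variable {M : Type u} [Monoid M] {E : Type u} [Monoid E]

lemma part1_forward (Fe : ActCat M ≌ ActCat E) :
    ∃ A : ActCat M, Projective A ∧ IsSeparator A ∧ CyclicAct A ∧
      Nonempty (E ≃* CategoryTheory.End A) := by
  refine ⟨Fe.inverse.obj (reg E), ?_, ?_, ?_, ?_⟩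
  · exact (Fe.symm.map_projective_iff (reg E)).2 projective_reg
  · rw [isSeparator_def]
    intro X Y f g hfg
    apply Fe.functor.map_injective
    apply (isSeparator_reg (N := E)).def
    intro h'
    have hh := hfg ((Fe.symm.toAdjunction.homEquiv (reg E) X).symm h')
    have h1 := congrArg (Fe.symm.toAdjunction.homEquiv (reg E) Y) hh
    rw [Adjunction.homEquiv_naturality_right, Adjunction.homEquiv_naturality_right,
        Equiv.apply_symm_apply] at h1
    exact h1
  · -- cyclic
    set A := Fe.inverse.obj (reg E) with hA
    let ι : Fe.functor.obj A ≅ reg E := Fe.counitIso.app (reg E)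
    let v : A.obj (pt M) → (Fe.functor.obj (reg M) ⟶ reg E) :=
      fun a => Fe.functor.map (toHom a) ≫ ι.hom
    have hje : ∀ (Z : ActCat E) (f g : reg E ⟶ Z), (∀ a, v a ≫ f = v a ≫ g) → f = g := by
      intro Z f g h
      have key : ∀ a, toHom a ≫ Fe.toAdjunction.homEquiv A Z (ι.hom ≫ f)
          = toHom a ≫ Fe.toAdjunction.homEquiv A Z (ι.hom ≫ g) := by
        intro a
        have h0 : Fe.functor.map (toHom a) ≫ (ι.hom ≫ f)
            = Fe.functor.map (toHom a) ≫ (ι.hom ≫ g) := by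
          have := h a
          simpa [v, Category.assoc] using this
        have h2 := congrArg (Fe.toAdjunction.homEquiv (reg M) Z) h0
        rw [Adjunction.homEquiv_naturality_left, Adjunction.homEquiv_naturality_left] at h2
        exact h2
      have hW : Fe.toAdjunction.homEquiv A Z (ι.hom ≫ f)
          = Fe.toAdjunction.homEquiv A Z (ι.hom ≫ g) := by
        apply hom_ext
        ext a
        have h3 := congrArg
          (fun (t : reg M ⟶ Fe.inverse.obj Z) => t.app (pt M) (1 : M)) (key a)
        change (Fe.toAdjunction.homEquiv A Z (ι.hom ≫ f)).app (pt M) (act A a 1)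
          = (Fe.toAdjunction.homEquiv A Z (ι.hom ≫ g)).app (pt M) (act A a 1) at h3
        rwa [act_one] at h3
      have h4 := (Fe.toAdjunction.homEquiv A Z).injective hW
      rwa [cancel_epi ι.hom] at h4
    obtain ⟨a, x, hx⟩ := jointly_surjective
      (fun _ : A.obj (pt M) => Fe.functor.obj (reg M)) (reg E) v hje (1 : E)
    have hsurj : Function.Surjective ((v a).app (pt E)) := by
      intro y
      refine ⟨act (Fe.functor.obj (reg M)) x y, ?_⟩
      rw [app_act, hx, act_reg, one_mul]
    have hepi : Epi (v a) := epi_of_surjective _ hsurj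
    have hepi2 : Epi (Fe.functor.map (toHom a)) := by
      have hv : Fe.functor.map (toHom a) = v a ≫ ι.inv := by
        simp [v, Category.assoc]
      rw [hv]
      exact epi_comp _ _
    have hepi3 : Epi (toHom a : reg M ⟶ A) := Fe.functor.epi_of_epi_map hepi2
    refine ⟨a, fun y => ?_⟩
    obtain ⟨m, hm⟩ := epi_surjective (toHom a) y
    exact ⟨m, hm.symm⟩
  · -- monoid isomorphism
    let iso1 : E ≃* CategoryTheory.End (reg E) :=
      { toFun := fun e => (toHom (show (reg E).obj (pt E) from e) : reg E ⟶ reg E)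
        invFun := fun u => u.app (pt E) (1 : E)
        left_inv := fun e => by
          show act (reg E) e 1 = e
          rw [act_reg, mul_one]
        right_inv := fun u => (hom_eq_toHom u).symm
        map_mul' := fun e e' => by
          apply hom_ext
          ext n
          show act (reg E) (e * e') n = act (reg E) e (act (reg E) e' n)
          exact mul_assoc e e' n }
    let iso2 : CategoryTheory.End (reg E) ≃* CategoryTheory.End (Fe.inverse.obj (reg E)) :=
      { toFun := fun u => Fe.inverse.map u
        invFun := fun u => Fe.inverse.preimage u
        left_inv := fun u => Fe.inverse.map_injective (Fe.inverse.map_preimage _)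
        right_inv := fun u => Fe.inverse.map_preimage _
        map_mul' := fun u v => by
          show Fe.inverse.map (u * v) = _
          rw [End.mul_def, End.mul_def, Functor.map_comp] }
    exact ⟨iso1.trans iso2⟩

end Morita

/-- Morita theorem for monoids: the categories of right `M`-acts and right `E`-acts are
equivalent if and only if there is a cyclic projective generator `A` of the category of
right `M`-acts whose endomorphism monoid is isomorphic to `E`; in that case the
equivalence is realized by the functor `Hom_M(A, −)` (whose left adjoint is `− ⊗_E A`). -/

theorem morita_for_acts {M : Type u} [Monoid M] {E : Type u} [Monoid E] :
    (Nonempty (ActCat M ≌ ActCat E) ↔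
      ∃ A : ActCat M, Projective A ∧ IsSeparator A ∧ CyclicAct A ∧
        Nonempty (E ≃* CategoryTheory.End A)) ∧
    (∀ (A : ActCat M) (φ : E ≃* CategoryTheory.End A),
      Projective A → IsSeparator A → CyclicAct A →
        (homFunctor A φ.toMonoidHom).IsEquivalence) := by
  constructor
  · constructor
    · rintro ⟨Fe⟩
      exact Morita.part1_forward Fe
    · rintro ⟨A, hproj, hsep, hcyc, ⟨φ⟩⟩
      haveI := Morita.homFunctor_isEquivalence A φ hproj hsep hcyc
      exact ⟨(homFunctor A φ.toMonoidHom).asEquivalence⟩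
  · intro A φ hproj hsep hcyc
    exact Morita.homFunctor_isEquivalence A φ hproj hsep hcyc
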